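/- arXiv:1905.13181 — 4 statements merged into one kernel-verified Lean document; each statement's English description precedes it below -/
import Mathlib

section
/- Under the assumption that the linear system y = A x has a unique solution x̃ in {0,1}^n, for any number of measurements m ≥ 1 the vector x̃ is the unique global minimizer of the optimization problem: minimize f(x) = Σ_{i=1}^n (x_i − x_i²) over x ∈ [0,1]^n subject to A x = y; moreover the optimal value of this problem is 0. (Proposition 1 of the paper.) -/
/-- Proposition 1: under uniqueness of the binary solution of `A x = y`,
for any `m ≥ 1` the vector `x̃` is the unique global minimizer of
`min Σ (x_i - x_i²)` over `[0,1]^n` subject to `A x = y`, with optimal value `0`. -/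
theorem stmt_0 (n m : ℕ) (hn : 0 < n) (hm : 1 ≤ m)
    (A : Matrix (Fin m) (Fin n) ℝ) (y : Fin m → ℝ) (xt : Fin n → ℝ)
    (hbin : ∀ i, xt i = 0 ∨ xt i = 1) (hsol : A.mulVec xt = y)
    (huniq : ∀ x : Fin n → ℝ, (∀ i, x i = 0 ∨ x i = 1) → A.mulVec x = y → x = xt) :
    (∀ i, xt i ∈ Set.Icc (0 : ℝ) 1) ∧ A.mulVec xt = y ∧
    (∑ i, (xt i - (xt i) ^ 2)) = 0 ∧
    ∀ x : Fin n → ℝ, (∀ i, x i ∈ Set.Icc (0 : ℝ) 1) → A.mulVec x = y → x ≠ xt →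
      (∑ i, (xt i - (xt i) ^ 2)) < ∑ i, (x i - (x i) ^ 2) := by
  have hzero : (∑ i, (xt i - (xt i) ^ 2)) = 0 := by
    apply Finset.sum_eq_zero
    intro i _
    rcases hbin i with h | h <;> rw [h] <;> ring
  refine ⟨fun i => ?_, hsol, hzero, ?_⟩
  · rcases hbin i with h | h <;> rw [h] <;> simp
  · intro x hx hxsol hxne
    rw [hzero]
    have hterm : ∀ i ∈ Finset.univ, (0:ℝ) ≤ x i - (x i) ^ 2 := by
      intro i _
      have h0 := (hx i).1
      have h1 := (hx i).2
      nlinarith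
    refine Finset.sum_pos' hterm ?_
    by_contra hcon
    push_neg at hcon
    apply hxne
    apply huniq x _ hxsol
    intro i
    have hle := hcon i (Finset.mem_univ i)
    have h0 := (hx i).1
    have h1 := (hx i).2
    have heq : x i - (x i)^2 = 0 := le_antisymm hle (hterm i (Finset.mem_univ i))
    have hm0 : x i * (1 - x i) = 0 := by nlinarith
    rcases mul_eq_zero.mp hm0 with h | h
    · left; exact h
    · right; linarith
end

section
/- Define the index sets I_1 = {x_1, z_{1,1}, …, z_{m,1}}, I_l = {x_l, z_{1,l−1}, z_{1,l}, …, z_{m,l−1}, z_{m,l}} for l = 2, …, n−1, and I_n = {x_n, z_{1,n−1}, …, z_{m,n−1}}, viewed as subsets of the set of n + m(n−1) variables {x_1,…,x_n} ∪ {z_{i,j} : 1 ≤ i ≤ m, 1 ≤ j ≤ n−1}. Then: (i) the union of I_1, …, I_n is the whole variable set, and (ii) the running intersection property holds: for every l = 1, …, n−1 there exists s ≤ l such that I_{l+1} ∩ (I_1 ∪ ⋯ ∪ I_l) ⊆ I_s; in fact one may take s = l. (Proposition 3 of the paper.) -/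
/-- Proposition 3: the sets `I₁,…,I_n` (here `0`-indexed: `I_l` contains the variable `x_l`
together with the slack variables `z_{i,j}` with `j = l - 1` or `j = l`) cover the whole
variable set `Fin n ⊕ (Fin m × Fin (n-1))` and satisfy the running intersection property;
in fact one may take `s = l`. -/
theorem stmt_5 (n m : ℕ) (hn : 2 ≤ n) (hm : 1 ≤ m)
    (I : Fin n → Set (Fin n ⊕ Fin m × Fin (n - 1)))
    (hI : ∀ l, I l = {v | v = Sum.inl l ∨
      ∃ (i : Fin m) (j : Fin (n - 1)), v = Sum.inr (i, j) ∧
        ((j : ℕ) = (l : ℕ) ∨ (j : ℕ) + 1 = (l : ℕ))}) :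
    (⋃ l, I l) = Set.univ ∧
    ∀ (l : Fin n) (hl : (l : ℕ) + 1 < n),
      (∃ s : Fin n, (s : ℕ) ≤ (l : ℕ) ∧
        I ⟨(l : ℕ) + 1, hl⟩ ∩ (⋃ j : {j : Fin n // (j : ℕ) ≤ (l : ℕ)}, I j) ⊆ I s) ∧
      I ⟨(l : ℕ) + 1, hl⟩ ∩ (⋃ j : {j : Fin n // (j : ℕ) ≤ (l : ℕ)}, I j) ⊆ I l := by
  constructor
  · ext v
    simp only [Set.mem_iUnion, Set.mem_univ, iff_true]
    cases v with
    | inl k => exact ⟨k, by rw [hI]; left; rfl⟩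
    | inr p =>
      obtain ⟨i, j⟩ := p
      have hj : (j : ℕ) < n := lt_of_lt_of_le j.2 (Nat.sub_le n 1)
      exact ⟨⟨j, hj⟩, by rw [hI]; right; exact ⟨i, j, rfl, Or.inl rfl⟩⟩
  · intro l hl
    have key : I ⟨(l : ℕ) + 1, hl⟩ ∩ (⋃ j : {j : Fin n // (j : ℕ) ≤ (l : ℕ)}, I j) ⊆ I l := by
      rintro v ⟨hv1, hv2⟩
      rw [hI] at hv1
      simp only [Set.mem_iUnion] at hv2
      obtain ⟨⟨s, hs⟩, hvs⟩ := hv2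
      rw [hI] at hvs
      rw [hI]
      rcases hv1 with h | ⟨i, j, rfl, hj⟩
      · subst h
        rcases hvs with h' | ⟨i, j, h', _⟩
        · have : ((l : ℕ) + 1 : ℕ) = (s : ℕ) := by
            have := Sum.inl.inj h'
            exact congrArg Fin.val this
          omega
        · exact absurd h' (by simp)
      · rcases hvs with h' | ⟨i', j', h', hj'⟩
        · exact absurd h' (by simp)
        · obtain ⟨hi, hjj⟩ := Prod.mk.injEq .. ▸ Sum.inr.inj h'
          have hj2 : (j : ℕ) = (j' : ℕ) := congrArg Fin.val hjj
          right
          have hval : ((⟨(l : ℕ) + 1, hl⟩ : Fin n) : ℕ) = (l : ℕ) + 1 := rfl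
          have hj'' : (j' : ℕ) = (s : ℕ) ∨ (j' : ℕ) + 1 = (s : ℕ) := hj'
          have hjn : (j : ℕ) = (l : ℕ) + 1 ∨ (j : ℕ) + 1 = (l : ℕ) + 1 := hval ▸ hj
          exact ⟨i, j, rfl, Or.inl (by omega)⟩
    exact ⟨⟨l, ⟨le_refl _, key⟩⟩, key⟩
end

section
/- Suppose the measurements are y = A x̃ + ζ where x̃ ∈ {0,1}^n and ‖ζ‖_∞ ≤ η. Then every global minimizer x* of the noisy problem — minimize f(x) = Σ_{i=1}^n (x_i − x_i²) over x ∈ [0,1]^n subject to ‖A x − y‖_∞ ≤ η — is a binary vector, i.e., every component of x* equals 0 or 1. -/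
/-- Noisy case: if `y = A x̃ + ζ` with `x̃ ∈ {0,1}^n` and `‖ζ‖_∞ ≤ η`, then every global
minimizer of `min Σ (x_i - x_i²)` over `[0,1]^n` subject to `‖A x - y‖_∞ ≤ η` is binary. -/
theorem stmt_9 (n m : ℕ) (hn : 0 < n) (hm : 0 < m)
    (A : Matrix (Fin m) (Fin n) ℝ) (xt : Fin n → ℝ) (ζ : Fin m → ℝ) (η : ℝ)
    (hη : 0 < η) (hbin : ∀ i, xt i = 0 ∨ xt i = 1)
    (hζ : ∀ i, |ζ i| ≤ η) (y : Fin m → ℝ) (hy : y = A.mulVec xt + ζ)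
    (xstar : Fin n → ℝ) (hfeas : ∀ i, xstar i ∈ Set.Icc (0 : ℝ) 1)
    (hconstr : ∀ i, |A.mulVec xstar i - y i| ≤ η)
    (hmin : ∀ x : Fin n → ℝ, (∀ i, x i ∈ Set.Icc (0 : ℝ) 1) →
      (∀ i, |A.mulVec x i - y i| ≤ η) →
      (∑ i, (xstar i - (xstar i) ^ 2)) ≤ ∑ i, (x i - (x i) ^ 2)) :
    ∀ i, xstar i = 0 ∨ xstar i = 1 := by
  have hxtfeas : ∀ i, xt i ∈ Set.Icc (0 : ℝ) 1 := by
    intro i; rcases hbin i with h | h <;> simp [h]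
  have hxtconstr : ∀ i, |A.mulVec xt i - y i| ≤ η := by
    intro i
    have : A.mulVec xt i - y i = -ζ i := by simp [hy]
    rw [this, abs_neg]; exact hζ i
  have hle := hmin xt hxtfeas hxtconstr
  have hxt0 : ∑ i, (xt i - (xt i) ^ 2) = 0 := by
    apply Finset.sum_eq_zero
    intro i _
    rcases hbin i with h | h <;> simp [h]
  have hnonneg : ∀ i ∈ Finset.univ, 0 ≤ xstar i - (xstar i) ^ 2 := by
    intro i _
    have h := hfeas i
    nlinarith [h.1, h.2]
  have hzero : ∀ i ∈ Finset.univ, xstar i - (xstar i) ^ 2 = 0 := by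
    apply (Finset.sum_eq_zero_iff_of_nonneg hnonneg).mp
    linarith [hle, hxt0.ge, hxt0.le, Finset.sum_nonneg hnonneg]
  intro i
  have h := hzero i (Finset.mem_univ i)
  have : xstar i * (1 - xstar i) = 0 := by nlinarith
  rcases mul_eq_zero.mp this with h' | h'
  · left; exact h'
  · right; linarith
end

section
/- Let α < β be real numbers and assume that the linear system y = A x has a unique solution x̃ in {α,β}^n. Then x̃ is the unique global minimizer of the problem: minimize g(x) = Σ_{i=1}^n (x_i − α)(β − x_i) over x ∈ [α,β]^n subject to A x = y, and the optimal value is 0. (This is the extension of Proposition 1 to a general binary alphabet {α,β}, stated in the Remark of Section 2.) -/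
/-- Extension of Proposition 1 to a general binary alphabet `{α,β}`: if `x̃` is the unique
solution of `A x = y` with components in `{α,β}`, then `x̃` is the unique global minimizer
of `min Σ (x_i - α)(β - x_i)` over `[α,β]^n` subject to `A x = y`, with optimal value `0`. -/
theorem stmt_11 (n m : ℕ) (hn : 0 < n) (hm : 0 < m)
    (A : Matrix (Fin m) (Fin n) ℝ) (y : Fin m → ℝ) (α β : ℝ) (hαβ : α < β)
    (xt : Fin n → ℝ) (hbin : ∀ i, xt i = α ∨ xt i = β) (hsol : A.mulVec xt = y)
    (huniq : ∀ x : Fin n → ℝ, (∀ i, x i = α ∨ x i = β) → A.mulVec x = y → x = xt) :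
    (∀ i, xt i ∈ Set.Icc α β) ∧ A.mulVec xt = y ∧
    (∑ i, (xt i - α) * (β - xt i)) = 0 ∧
    ∀ x : Fin n → ℝ, (∀ i, x i ∈ Set.Icc α β) → A.mulVec x = y → x ≠ xt →
      (∑ i, (xt i - α) * (β - xt i)) < ∑ i, (x i - α) * (β - x i) := by
  have hzero : (∑ i, (xt i - α) * (β - xt i)) = 0 := by
    apply Finset.sum_eq_zero
    intro i _
    rcases hbin i with h | h <;> simp [h]
  refine ⟨fun i => ?_, hsol, hzero, fun x hx hAx hne => ?_⟩
  · rcases hbin i with h | h <;> simp [h, le_of_lt hαβ]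
  · rw [hzero]
    have hnonneg : ∀ i ∈ Finset.univ, (0:ℝ) ≤ (x i - α) * (β - x i) := by
      intro i _
      have := (hx i).1; have := (hx i).2
      nlinarith
    rcases (Finset.sum_nonneg hnonneg).lt_or_eq with h | h
    · exact h
    · exfalso
      apply hne
      apply huniq x _ hAx
      intro i
      have hi : (x i - α) * (β - x i) = 0 :=
        (Finset.sum_eq_zero_iff_of_nonneg hnonneg).1 h.symm i (Finset.mem_univ i)
      rcases mul_eq_zero.1 hi with h' | h'
      · left; linarith
      · right; linarith
end
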